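/- For every integer k > 4, the first player wins Building Nim BN(2^k − 2, 5); formally, BNwins (fun _ : Fin 5 => 0) (2^k − 2) for all k > 4. -/

import Mathlib

instance : Std.Commutative (fun x y : ℕ => x ^^^ y) := ⟨Nat.xor_comm⟩
instance : Std.Associative (fun x y : ℕ => x ^^^ y) := ⟨Nat.xor_assoc⟩

/-- `BNwins s r` holds iff the player to move wins Building Nim from position `s`
(the stack heights) with `r` tokens remaining to be placed. When no tokens remain,
Nim play starts, and by Bouton's theorem the player to move wins iff the
Nim-sum (bitwise XOR) of the stack heights is nonzero. -/
def BNwins {ℓ : ℕ} : (Fin ℓ → ℕ) → ℕ → Prop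
  | s, 0 => Finset.univ.fold (fun x y : ℕ => x ^^^ y) 0 s ≠ 0
  | s, r + 1 => ∃ i : Fin ℓ, ¬ BNwins (Function.update s i (s i + 1)) r

namespace BNaux


/-- geometric series of `2^P` blocks -/
def geomRec (P : Nat) : Nat → Nat
  | 0 => 0
  | T + 1 => 1 + 2 ^ P * geomRec P T

theorem geomRec_mul (P : Nat) : ∀ T, (2 ^ P - 1) * geomRec P T = 2 ^ (P * T) - 1 := by
  intro T
  induction T with
  | zero => simp [geomRec]
  | succ T ih =>
    have hA : 1 ≤ 2 ^ P := Nat.one_le_two_pow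
    have hC : 1 ≤ 2 ^ (P * T) := Nat.one_le_two_pow
    have hpow : 2 ^ (P * (T + 1)) = 2 ^ P * 2 ^ (P * T) := by
      rw [← pow_add]; ring_nf
    rw [geomRec, Nat.mul_add, mul_one, hpow]
    rw [mul_left_comm, ih]
    have hAC : 1 ≤ 2 ^ P * 2 ^ (P * T) := Nat.one_le_iff_ne_zero.mpr (by positivity)
    zify [hA, hC, hAC]
    ring

theorem geomRec_eq (P T : Nat) (hP : 0 < P) :
    (2 ^ (P * T) - 1) / (2 ^ P - 1) = geomRec P T := by
  have h1 : 0 < 2 ^ P - 1 := by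
    have : 2 ^ 1 ≤ 2 ^ P := Nat.pow_le_pow_right (by norm_num) hP
    omega
  exact Nat.div_eq_of_eq_mul_left h1 (by rw [← geomRec_mul P T]; ring)

theorem testBit_add_mul_low (B M P r : Nat) (hr : r < P) :
    (B + 2 ^ P * M).testBit r = B.testBit r := by
  rw [Nat.testBit_eq_decide_div_mod_eq, Nat.testBit_eq_decide_div_mod_eq]
  have h2 : 2 ^ P * M = 2 ^ r * (2 ^ (P - r) * M) := by
    rw [← mul_assoc, ← pow_add]
    congr 2
    omega
  have h3 : (B + 2 ^ P * M) / 2 ^ r = B / 2 ^ r + 2 ^ (P - r) * M := by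
    rw [h2, Nat.add_mul_div_left _ _ (Nat.pow_pos (n := r) (by norm_num : 0 < 2))]
  have h4 : 2 ^ (P - r) * M = 2 * (2 ^ (P - r - 1) * M) := by
    rw [← mul_assoc, ← pow_succ']
    congr 2
    omega
  rw [h3, h4, decide_eq_decide]
  omega

theorem testBit_add_mul_high (B M P n : Nat) (hB : B < 2 ^ P) :
    (B + 2 ^ P * M).testBit (P + n) = M.testBit n := by
  rw [Nat.testBit_eq_decide_div_mod_eq, Nat.testBit_eq_decide_div_mod_eq]
  have h1 : (B + 2 ^ P * M) / 2 ^ (P + n) = M / 2 ^ n := by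
    rw [pow_add, ← Nat.div_div_eq_div_mul]
    congr 1
    rw [Nat.add_mul_div_left _ _ (Nat.pow_pos (n := P) (by norm_num : 0 < 2)),
      Nat.div_eq_of_lt hB, Nat.zero_add]
  rw [h1]

theorem testBit_mul_geomRec (P B : Nat) (hP : 0 < P) (hB : B < 2 ^ P) :
    ∀ T j, j < P * T → (B * geomRec P T).testBit j = B.testBit (j % P) := by
  intro T
  induction T with
  | zero => intro j h; simp at h
  | succ T ih =>
    intro j hj
    have hrw : B * geomRec P (T + 1) = B + 2 ^ P * (B * geomRec P T) := by
      rw [geomRec]; ring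
    rw [hrw]
    rcases Nat.lt_or_ge j P with h | h
    · rw [testBit_add_mul_low _ _ _ _ h, Nat.mod_eq_of_lt h]
    · have hmul : P * (T + 1) = P * T + P := by ring
      have hj' : j - P < P * T := by omega
      have hjeq : j = P + (j - P) := by omega
      rw [hjeq, testBit_add_mul_high _ _ _ _ hB, ih _ hj', Nat.add_mod_left]
theorem testBit_two_pow_sub_two_pow (b1 b2 r : Nat) (h12 : b1 ≤ b2) :
    (2 ^ b2 - 2 ^ b1).testBit r = decide (b1 ≤ r ∧ r < b2) := by
  rcases Nat.lt_or_ge r b1 with h | h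
  · -- r < b1 : even quotient
    have hd : (2 ^ b2 - 2 ^ b1) / 2 ^ r = 2 * (2 ^ (b2 - r - 1) - 2 ^ (b1 - r - 1)) := by
      have e1 : 2 ^ b2 = 2 ^ r * (2 * 2 ^ (b2 - r - 1)) := by
        rw [← pow_succ', ← pow_add]; congr 1; omega
      have e2 : 2 ^ b1 = 2 ^ r * (2 * 2 ^ (b1 - r - 1)) := by
        rw [← pow_succ', ← pow_add]; congr 1; omega
      rw [e1, e2, ← Nat.mul_sub, ← Nat.mul_sub,
        Nat.mul_div_cancel_left _ (Nat.pow_pos (n := r) (by norm_num : 0 < 2))]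
    rw [Nat.testBit_eq_decide_div_mod_eq, hd, decide_eq_decide]
    omega
  · rcases Nat.lt_or_ge r b2 with h2 | h2
    · -- b1 ≤ r < b2 : odd quotient
      have hd : (2 ^ b2 - 2 ^ b1) / 2 ^ r = 2 ^ (b2 - r) - 1 := by
        have e1 : 2 ^ b2 - 2 ^ b1 = 2 ^ r * (2 ^ (b2 - r) - 1) + (2 ^ r - 2 ^ b1) := by
          have e2 : 2 ^ b2 = 2 ^ r * 2 ^ (b2 - r) := by rw [← pow_add]; congr 1; omega
          have e3 : 2 ^ b1 ≤ 2 ^ r := Nat.pow_le_pow_right (by norm_num) h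
          have e4 : 2 ^ r ≤ 2 ^ b2 := Nat.pow_le_pow_right (by norm_num) (le_of_lt h2)
          have e5 : 1 ≤ 2 ^ (b2 - r) := Nat.one_le_two_pow
          rw [Nat.mul_sub, mul_one, ← e2]
          omega
        have e3 : 2 ^ b1 ≤ 2 ^ r := Nat.pow_le_pow_right (by norm_num) h
        have e7 : (1:ℕ) ≤ 2 ^ b1 := Nat.one_le_two_pow
        rw [e1, Nat.add_comm, Nat.add_mul_div_left _ _ (Nat.pow_pos (n := r) (by norm_num : 0 < 2)),
          Nat.div_eq_of_lt (by omega), Nat.zero_add]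
      rw [Nat.testBit_eq_decide_div_mod_eq, hd, decide_eq_decide]
      have e6 : 2 ^ (b2 - r) = 2 * 2 ^ (b2 - r - 1) := by
        rw [← pow_succ']; congr 1; omega
      have e5 : 1 ≤ 2 ^ (b2 - r - 1) := Nat.one_le_two_pow
      omega
    · -- r ≥ b2
      have hlt : 2 ^ b2 - 2 ^ b1 < 2 ^ r := by
        have e4 : 2 ^ b2 ≤ 2 ^ r := Nat.pow_le_pow_right (by norm_num) h2
        have e5 : 1 ≤ 2 ^ b1 := Nat.one_le_two_pow
        have e6 : (1:ℕ) ≤ 2 ^ r := Nat.one_le_two_pow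
        omega
      rw [Nat.testBit_lt_two_pow hlt]
      symm
      simp only [decide_eq_false_iff_not]
      omega

def PMask (P B : Nat) : Nat := B * ((2 ^ 32768 - 1) / (2 ^ P - 1))
def HM (p : Nat) : Nat := PMask (8 * p) (2 ^ (8 * p) - 2 ^ (7 * p))
def LM (p : Nat) : Nat := (2 ^ 32768 - 1) ^^^ HM p
def pst (p X : Nat) : Nat := ((X >>> p) &&& LM p) ||| ((X <<< (7 * p)) &&& HM p)
def stp (p j : Nat) : Nat := if j / p % 8 = 7 then j - 7 * p else j + p
def GT (t : Nat) : Nat := PMask (2 ^ (t + 1)) (2 ^ (2 ^ (t + 1)) - 2 ^ (2 ^ t))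
def PAR (b : Nat) : Nat := GT b ^^^ GT (b + 3) ^^^ GT (b + 6) ^^^ GT (b + 9) ^^^ GT (b + 12)
def E0M : Nat := PAR 0 ||| PAR 1 ||| PAR 2
def levelD (X : Nat) : Nat :=
  pst 1 X &&& pst 8 X &&& pst 64 X &&& pst 512 X &&& pst 4096 X
def levelE (X : Nat) : Nat :=
  pst 1 X ||| pst 8 X ||| pst 64 X ||| pst 512 X ||| pst 4096 X
def EL : Nat → Nat
  | 0 => E0M
  | m + 1 => levelE (levelD (EL m))

theorem testBit_PMask (P B j : Nat) (hdvd : P ∣ 32768) (hP : 0 < P) (hB : B < 2 ^ P)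
    (hj : j < 32768) : (PMask P B).testBit j = B.testBit (j % P) := by
  obtain ⟨T, hT⟩ := hdvd
  rw [PMask, show (32768 : ℕ) = P * T from hT, geomRec_eq P T hP]
  exact testBit_mul_geomRec P B hP hB T j (hT ▸ hj)

theorem testBit_HM (p j : Nat) (hdvd : 8 * p ∣ 32768) (hp : 0 < p) (hj : j < 32768) :
    (HM p).testBit j = decide (j / p % 8 = 7) := by
  have hB : 2 ^ (8 * p) - 2 ^ (7 * p) < 2 ^ (8 * p) := by
    have : (1:ℕ) ≤ 2 ^ (7 * p) := Nat.one_le_two_pow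
    have : (1:ℕ) ≤ 2 ^ (8 * p) := Nat.one_le_two_pow
    omega
  rw [HM, testBit_PMask _ _ _ hdvd (by omega) hB hj,
    testBit_two_pow_sub_two_pow _ _ _ (by omega), decide_eq_decide]
  have hr : j % (8 * p) < 8 * p := Nat.mod_lt _ (by omega)
  have hdm : j / p % 8 = j % (p * 8) / p := (Nat.mod_mul_right_div_self j p 8).symm
  rw [hdm, show p * 8 = 8 * p from by ring]
  set r := j % (8 * p) with hrdef
  constructor
  · intro ⟨h1, _⟩
    exact Nat.div_eq_of_lt_le (by omega) (by omega)
  · intro h7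
    have h1 : 7 * p ≤ r := by
      have := (Nat.le_div_iff_mul_le hp).mp (le_of_eq h7.symm)
      omega
    exact ⟨h1, hr⟩

theorem testBit_LM (p j : Nat) (hdvd : 8 * p ∣ 32768) (hp : 0 < p) (hj : j < 32768) :
    (LM p).testBit j = !decide (j / p % 8 = 7) := by
  rw [LM, Nat.testBit_xor, Nat.testBit_two_pow_sub_one, testBit_HM p j hdvd hp hj,
    decide_eq_true_eq.mpr hj]
  cases decide (j / p % 8 = 7) <;> rfl

theorem testBit_pst (p X j : Nat) (hdvd : 8 * p ∣ 32768) (hp : 0 < p) (hj : j < 32768) :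
    (pst p X).testBit j = X.testBit (stp p j) := by
  rw [pst, stp, Nat.testBit_or, Nat.testBit_and, Nat.testBit_and, Nat.testBit_shiftRight,
    Nat.testBit_shiftLeft, testBit_LM p j hdvd hp hj, testBit_HM p j hdvd hp hj]
  by_cases h : j / p % 8 = 7
  · have h1 : 7 ≤ j / p := h ▸ Nat.mod_le (j / p) 8
    have h7 : 7 * p ≤ j :=
      calc 7 * p ≤ j / p * p := Nat.mul_le_mul_right p h1
        _ ≤ j := Nat.div_mul_le_self j p
    rw [if_pos h]
    simp [h, h7]
  · rw [if_neg h]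
    simp [h, Nat.add_comm p j]

theorem testBit_GT (t j : Nat) (ht : t + 1 ≤ 15) (hj : j < 32768) :
    (GT t).testBit j = j.testBit t := by
  have hdvd : 2 ^ (t + 1) ∣ 32768 := by
    rw [show (32768:ℕ) = 2 ^ 15 from by norm_num]
    exact pow_dvd_pow 2 ht
  have h2t : 2 ^ t < 2 ^ (t + 1) := Nat.pow_lt_pow_right (by norm_num) (by omega)
  have hB : 2 ^ 2 ^ (t + 1) - 2 ^ 2 ^ t < 2 ^ 2 ^ (t + 1) := by
    have : (1:ℕ) ≤ 2 ^ 2 ^ t := Nat.one_le_two_pow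
    have : (1:ℕ) ≤ 2 ^ 2 ^ (t + 1) := Nat.one_le_two_pow
    omega
  rw [GT, testBit_PMask _ _ _ hdvd (Nat.pow_pos (by norm_num : 0 < 2)) hB hj,
    testBit_two_pow_sub_two_pow _ _ _ (le_of_lt h2t), Nat.testBit_eq_decide_div_mod_eq,
    decide_eq_decide]
  have hr : j % 2 ^ (t + 1) < 2 ^ (t + 1) :=
    Nat.mod_lt _ (Nat.pow_pos (by norm_num : 0 < 2))
  have hdm : j / 2 ^ t % 2 = j % (2 ^ t * 2) / 2 ^ t := (Nat.mod_mul_right_div_self j _ 2).symm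
  rw [hdm, show (2:ℕ) ^ t * 2 = 2 ^ (t + 1) from by rw [pow_succ]]
  set r := j % 2 ^ (t + 1)
  have h2tp : 0 < 2 ^ t := Nat.pow_pos (by norm_num : 0 < 2)
  have hps : (2:ℕ) ^ (t + 1) = 2 * 2 ^ t := by rw [pow_succ]; ring
  constructor
  · intro ⟨hx, _⟩
    exact Nat.div_eq_of_lt_le (by omega) (by omega)
  · intro h1
    have hge : 2 ^ t ≤ r := by
      have := (Nat.le_div_iff_mul_le h2tp).mp (le_of_eq h1.symm)
      omega
    exact ⟨hge, hr⟩

theorem testBit_levelD (X j : Nat) (hj : j < 32768) :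
    (levelD X).testBit j =
      (X.testBit (stp 1 j) && X.testBit (stp 8 j) && X.testBit (stp 64 j) &&
        X.testBit (stp 512 j) && X.testBit (stp 4096 j)) := by
  rw [levelD, Nat.testBit_and, Nat.testBit_and, Nat.testBit_and, Nat.testBit_and,
    testBit_pst 1 X j (by norm_num) (by norm_num) hj,
    testBit_pst 8 X j (by norm_num) (by norm_num) hj,
    testBit_pst 64 X j (by norm_num) (by norm_num) hj,
    testBit_pst 512 X j (by norm_num) (by norm_num) hj,
    testBit_pst 4096 X j (by norm_num) (by norm_num) hj]

theorem testBit_levelE (X j : Nat) (hj : j < 32768) :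
    (levelE X).testBit j =
      (X.testBit (stp 1 j) || X.testBit (stp 8 j) || X.testBit (stp 64 j) ||
        X.testBit (stp 512 j) || X.testBit (stp 4096 j)) := by
  rw [levelE, Nat.testBit_or, Nat.testBit_or, Nat.testBit_or, Nat.testBit_or,
    testBit_pst 1 X j (by norm_num) (by norm_num) hj,
    testBit_pst 8 X j (by norm_num) (by norm_num) hj,
    testBit_pst 64 X j (by norm_num) (by norm_num) hj,
    testBit_pst 512 X j (by norm_num) (by norm_num) hj,
    testBit_pst 4096 X j (by norm_num) (by norm_num) hj]

def idx (s : Fin 5 → ℕ) : ℕ :=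
  s 0 % 8 + 8 * (s 1 % 8) + 64 * (s 2 % 8) + 512 * (s 3 % 8) + 4096 * (s 4 % 8)

theorem idx_lt (s : Fin 5 → ℕ) : idx s < 32768 := by
  have h0 : s 0 % 8 < 8 := Nat.mod_lt _ (by norm_num)
  have h1 : s 1 % 8 < 8 := Nat.mod_lt _ (by norm_num)
  have h2 : s 2 % 8 < 8 := Nat.mod_lt _ (by norm_num)
  have h3 : s 3 % 8 < 8 := Nat.mod_lt _ (by norm_num)
  have h4 : s 4 % 8 < 8 := Nat.mod_lt _ (by norm_num)
  rw [idx]; omega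
theorem stp_idx0 (s : Fin 5 → ℕ) :
    stp 1 (idx s) = idx (Function.update s 0 (s 0 + 1)) := by
  have h0 : s 0 % 8 < 8 := Nat.mod_lt _ (by norm_num)
  have h1 : s 1 % 8 < 8 := Nat.mod_lt _ (by norm_num)
  have h2 : s 2 % 8 < 8 := Nat.mod_lt _ (by norm_num)
  have h3 : s 3 % 8 < 8 := Nat.mod_lt _ (by norm_num)
  have h4 : s 4 % 8 < 8 := Nat.mod_lt _ (by norm_num)
  rw [stp]
  split <;> simp (config := { decide := true }) only [idx, Function.update_apply, if_true, if_false] at * <;> omega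

theorem stp_idx1 (s : Fin 5 → ℕ) :
    stp 8 (idx s) = idx (Function.update s 1 (s 1 + 1)) := by
  have h0 : s 0 % 8 < 8 := Nat.mod_lt _ (by norm_num)
  have h1 : s 1 % 8 < 8 := Nat.mod_lt _ (by norm_num)
  have h2 : s 2 % 8 < 8 := Nat.mod_lt _ (by norm_num)
  have h3 : s 3 % 8 < 8 := Nat.mod_lt _ (by norm_num)
  have h4 : s 4 % 8 < 8 := Nat.mod_lt _ (by norm_num)
  rw [stp]
  split <;> simp (config := { decide := true }) only [idx, Function.update_apply, if_true, if_false] at * <;> omega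

theorem stp_idx2 (s : Fin 5 → ℕ) :
    stp 64 (idx s) = idx (Function.update s 2 (s 2 + 1)) := by
  have h0 : s 0 % 8 < 8 := Nat.mod_lt _ (by norm_num)
  have h1 : s 1 % 8 < 8 := Nat.mod_lt _ (by norm_num)
  have h2 : s 2 % 8 < 8 := Nat.mod_lt _ (by norm_num)
  have h3 : s 3 % 8 < 8 := Nat.mod_lt _ (by norm_num)
  have h4 : s 4 % 8 < 8 := Nat.mod_lt _ (by norm_num)
  rw [stp]
  split <;> simp (config := { decide := true }) only [idx, Function.update_apply, if_true, if_false] at * <;> omega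

theorem stp_idx3 (s : Fin 5 → ℕ) :
    stp 512 (idx s) = idx (Function.update s 3 (s 3 + 1)) := by
  have h0 : s 0 % 8 < 8 := Nat.mod_lt _ (by norm_num)
  have h1 : s 1 % 8 < 8 := Nat.mod_lt _ (by norm_num)
  have h2 : s 2 % 8 < 8 := Nat.mod_lt _ (by norm_num)
  have h3 : s 3 % 8 < 8 := Nat.mod_lt _ (by norm_num)
  have h4 : s 4 % 8 < 8 := Nat.mod_lt _ (by norm_num)
  rw [stp]
  split <;> simp (config := { decide := true }) only [idx, Function.update_apply, if_true, if_false] at * <;> omega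

theorem stp_idx4 (s : Fin 5 → ℕ) :
    stp 4096 (idx s) = idx (Function.update s 4 (s 4 + 1)) := by
  have h0 : s 0 % 8 < 8 := Nat.mod_lt _ (by norm_num)
  have h1 : s 1 % 8 < 8 := Nat.mod_lt _ (by norm_num)
  have h2 : s 2 % 8 < 8 := Nat.mod_lt _ (by norm_num)
  have h3 : s 3 % 8 < 8 := Nat.mod_lt _ (by norm_num)
  have h4 : s 4 % 8 < 8 := Nat.mod_lt _ (by norm_num)
  rw [stp]
  split <;> simp (config := { decide := true }) only [idx, Function.update_apply, if_true, if_false] at * <;> omega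

theorem fold_eq (s : Fin 5 → ℕ) :
    Finset.univ.fold (fun x y : ℕ => x ^^^ y) 0 s
      = s 0 ^^^ (s 1 ^^^ (s 2 ^^^ (s 3 ^^^ s 4))) := by
  rw [show (Finset.univ : Finset (Fin 5)) = {0, 1, 2, 3, 4} from by decide]
  rw [show ({0, 1, 2, 3, 4} : Finset (Fin 5))
      = insert 0 (insert 1 (insert 2 (insert 3 {4}))) from rfl]
  rw [Finset.fold_insert (by decide), Finset.fold_insert (by decide),
    Finset.fold_insert (by decide), Finset.fold_insert (by decide),
    Finset.fold_singleton, Nat.xor_zero]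

set_option exponentiation.threshold 100000 in
set_option maxRecDepth 20000 in
theorem el9 : EL 9 = 2 ^ 32768 - 1 := by decide

theorem PAR_bit (b j : Nat) (hb : b + 13 ≤ 15) (hj : j < 32768) :
    (PAR b).testBit j =
      ((((j.testBit b ^^ j.testBit (b + 3)) ^^ j.testBit (b + 6)) ^^ j.testBit (b + 9))
        ^^ j.testBit (b + 12)) := by
  rw [PAR, Nat.testBit_xor, Nat.testBit_xor, Nat.testBit_xor, Nat.testBit_xor,
    testBit_GT b j (by omega) hj, testBit_GT (b + 3) j (by omega) hj,
    testBit_GT (b + 6) j (by omega) hj, testBit_GT (b + 9) j (by omega) hj,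
    testBit_GT (b + 12) j (by omega) hj]

theorem E0_sound (s : Fin 5 → ℕ) (h : E0M.testBit (idx s) = true) :
    Finset.univ.fold (fun x y : ℕ => x ^^^ y) 0 s ≠ 0 := by
  intro hzero
  rw [fold_eq] at hzero
  have hj := idx_lt s
  -- bits of idx s are bits of the stack values
  have hfb : ∀ b : ℕ,
      ((s 0).testBit b ^^ ((s 1).testBit b ^^ ((s 2).testBit b ^^ ((s 3).testBit b ^^
        (s 4).testBit b)))) = false := by
    intro b
    rw [← Nat.testBit_xor, ← Nat.testBit_xor, ← Nat.testBit_xor, ← Nat.testBit_xor,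
      hzero, Nat.zero_testBit]
  have hp : ∀ b : ℕ, b < 3 → (PAR b).testBit (idx s) = false := by
    intro b hb
    rw [PAR_bit b _ (by omega) hj]
    have t0 : (idx s).testBit b = (s 0).testBit b := by
      interval_cases b <;>
      · rw [Nat.testBit_eq_decide_div_mod_eq, Nat.testBit_eq_decide_div_mod_eq, decide_eq_decide, idx]
        norm_num
        omega
    have t1 : (idx s).testBit (b + 3) = (s 1).testBit b := by
      interval_cases b <;>
      · rw [Nat.testBit_eq_decide_div_mod_eq, Nat.testBit_eq_decide_div_mod_eq, decide_eq_decide, idx]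
        norm_num
        omega
    have t2 : (idx s).testBit (b + 6) = (s 2).testBit b := by
      interval_cases b <;>
      · rw [Nat.testBit_eq_decide_div_mod_eq, Nat.testBit_eq_decide_div_mod_eq, decide_eq_decide, idx]
        norm_num
        omega
    have t3 : (idx s).testBit (b + 9) = (s 3).testBit b := by
      interval_cases b <;>
      · rw [Nat.testBit_eq_decide_div_mod_eq, Nat.testBit_eq_decide_div_mod_eq, decide_eq_decide, idx]
        norm_num
        omega
    have t4 : (idx s).testBit (b + 12) = (s 4).testBit b := by
      interval_cases b <;>
      · rw [Nat.testBit_eq_decide_div_mod_eq, Nat.testBit_eq_decide_div_mod_eq, decide_eq_decide, idx]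
        norm_num
        omega
    rw [t0, t1, t2, t3, t4]
    have := hfb b
    -- reassociate
    cases h0 : (s 0).testBit b <;> cases h1 : (s 1).testBit b <;>
      cases h2 : (s 2).testBit b <;> cases h3 : (s 3).testBit b <;>
      cases h4 : (s 4).testBit b <;>
      simp_all
  rw [E0M, Nat.testBit_or, Nat.testBit_or, hp 0 (by norm_num), hp 1 (by norm_num),
    hp 2 (by norm_num)] at h
  simp at h

theorem transfer_step (m : ℕ)
    (ih : ∀ s : Fin 5 → ℕ, (EL m).testBit (idx s) = true → BNwins s (2 * m))
    (s' : Fin 5 → ℕ) (h : (levelD (EL m)).testBit (idx s') = true) :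
    ¬ BNwins s' (2 * m + 1) := by
  intro hw
  have hw' : ∃ i : Fin 5, ¬ BNwins (Function.update s' i (s' i + 1)) (2 * m) := hw
  obtain ⟨i, hi⟩ := hw'
  apply hi
  apply ih
  rw [testBit_levelD _ _ (idx_lt s')] at h
  simp only [Bool.and_eq_true] at h
  obtain ⟨⟨⟨⟨h0, h1⟩, h2⟩, h3⟩, h4⟩ := h
  fin_cases i
  · exact stp_idx0 s' ▸ h0
  · exact stp_idx1 s' ▸ h1
  · exact stp_idx2 s' ▸ h2
  · exact stp_idx3 s' ▸ h3
  · exact stp_idx4 s' ▸ h4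

theorem transfer : ∀ m (s : Fin 5 → ℕ), (EL m).testBit (idx s) = true → BNwins s (2 * m) := by
  intro m
  induction m with
  | zero =>
    intro s h
    exact E0_sound s h
  | succ m ih =>
    intro s h
    have hlt := idx_lt s
    rw [show EL (m + 1) = levelE (levelD (EL m)) from rfl, testBit_levelE _ _ hlt] at h
    simp only [Bool.or_eq_true] at h
    show BNwins s (2 * m + 1 + 1)
    rcases h with ((((h0 | h1) | h2) | h3) | h4)
    · exact ⟨0, transfer_step m ih _ (stp_idx0 s ▸ h0)⟩
    · exact ⟨1, transfer_step m ih _ (stp_idx1 s ▸ h1)⟩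
    · exact ⟨2, transfer_step m ih _ (stp_idx2 s ▸ h2)⟩
    · exact ⟨3, transfer_step m ih _ (stp_idx3 s ▸ h3)⟩
    · exact ⟨4, transfer_step m ih _ (stp_idx4 s ▸ h4)⟩

theorem allwin_succ2 (r : ℕ) (h : ∀ s : Fin 5 → ℕ, BNwins s r) (s : Fin 5 → ℕ) :
    BNwins s (r + 2) := by
  show BNwins s (r + 1 + 1)
  refine ⟨0, fun hw => ?_⟩
  have hw' : ∃ i : Fin 5,
      ¬ BNwins (Function.update (Function.update s 0 (s 0 + 1)) i
        (Function.update s 0 (s 0 + 1) i + 1)) r := hw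
  obtain ⟨i, hi⟩ := hw'
  exact hi (h _)

theorem allwin_even : ∀ m (s : Fin 5 → ℕ), BNwins s (18 + 2 * m) := by
  intro m
  induction m with
  | zero =>
    intro s
    have h : (EL 9).testBit (idx s) = true := by
      rw [el9, Nat.testBit_two_pow_sub_one]
      simpa using idx_lt s
    exact transfer 9 s h
  | succ m ih =>
    intro s
    rw [show 18 + 2 * (m + 1) = 18 + 2 * m + 2 from by ring]
    exact allwin_succ2 _ ih s

end BNaux

/-- For every `k > 4`, the first player wins `BN(2 ^ k - 2, 5)`. -/
theorem first_player_wins_pow_two_sub_two (k : ℕ) (hk : 4 < k) :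
    BNwins (fun _ : Fin 5 => 0) (2 ^ k - 2) := by
  have hA : 16 ≤ 2 ^ (k - 1) := by
    calc (16 : ℕ) = 2 ^ 4 := by norm_num
      _ ≤ 2 ^ (k - 1) := Nat.pow_le_pow_right (by norm_num) (by omega)
  have hk2 : 2 ^ k = 2 * 2 ^ (k - 1) := by
    rw [← pow_succ', Nat.sub_add_cancel (by omega : 1 ≤ k)]
  rw [show 2 ^ k - 2 = 18 + 2 * (2 ^ (k - 1) - 10) from by omega]
  exact BNaux.allwin_even _ _
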